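/- For every real q ≥ 1 and every n ≥ 0, the Galton–Watson generation sizes satisfy E[Z_n^{2q}] ≤ E[ξ^{2q}]^n, where Z_0 = 1 (and the bound is interpreted as trivially true if E[ξ^{2q}] = ∞). -/

import Mathlib

open MeasureTheory ProbabilityTheory
open scoped ENNReal NNReal

lemma gw_aux_pow_sum_le {k : ℕ} (a : ℕ → ℝ≥0∞) {p : ℝ} (hp : 1 ≤ p) :
    (∑ i ∈ Finset.range k, a i) ^ p ≤ (k : ℝ≥0∞) ^ (p - 1) * ∑ i ∈ Finset.range k, a i ^ p := by
  rcases Nat.eq_zero_or_pos k with hk | hk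
  · subst hk
    simp [ENNReal.zero_rpow_of_pos (lt_of_lt_of_le one_pos hp)]
  · have hk0 : (k : ℝ≥0∞) ≠ 0 := by exact_mod_cast hk.ne'
    have hktop : (k : ℝ≥0∞) ≠ ⊤ := ENNReal.natCast_ne_top k
    have hw : ∑ _i ∈ Finset.range k, (k : ℝ≥0∞)⁻¹ = 1 := by
      simp [Finset.sum_const, ENNReal.mul_inv_cancel hk0 hktop]
    have h := ENNReal.rpow_arith_mean_le_arith_mean_rpow (Finset.range k)
      (fun _ => (k : ℝ≥0∞)⁻¹) a hw hp
    have hL : (∑ i ∈ Finset.range k, (k : ℝ≥0∞)⁻¹ * a i) ^ p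
        = ((k : ℝ≥0∞)⁻¹) ^ p * (∑ i ∈ Finset.range k, a i) ^ p := by
      rw [← Finset.mul_sum, ENNReal.mul_rpow_of_nonneg _ _ (by linarith)]
    have hR : ∑ i ∈ Finset.range k, (k : ℝ≥0∞)⁻¹ * a i ^ p
        = (k : ℝ≥0∞)⁻¹ * ∑ i ∈ Finset.range k, a i ^ p := (Finset.mul_sum ..).symm
    rw [hL, hR] at h
    calc (∑ i ∈ Finset.range k, a i) ^ p
        = (k : ℝ≥0∞) ^ p * (((k : ℝ≥0∞)⁻¹) ^ p * (∑ i ∈ Finset.range k, a i) ^ p) := by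
          rw [← mul_assoc, ← ENNReal.mul_rpow_of_nonneg _ _ (by linarith : (0:ℝ) ≤ p),
            ENNReal.mul_inv_cancel hk0 hktop, ENNReal.one_rpow, one_mul]
      _ ≤ (k : ℝ≥0∞) ^ p * ((k : ℝ≥0∞)⁻¹ * ∑ i ∈ Finset.range k, a i ^ p) :=
          mul_le_mul_right h _
      _ = (k : ℝ≥0∞) ^ (p - 1) * ∑ i ∈ Finset.range k, a i ^ p := by
          rw [← mul_assoc, ← ENNReal.rpow_neg_one (k : ℝ≥0∞),
            ← ENNReal.rpow_add _ _ hk0 hktop, sub_eq_add_neg]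
private lemma gw_moment_aux
    {Ω : Type*} [m0 : MeasurableSpace Ω] (μ : Measure Ω) [IsProbabilityMeasure μ]
    (ξ : ℕ → ℕ → Ω → ℕ) (ξ₀ : Ω → ℕ)
    (hmeas : ∀ n i, Measurable (ξ n i)) (hmeas0 : Measurable ξ₀)
    (hindep : iIndepFun
      (fun p : ℕ × ℕ => ξ p.1 p.2) μ)
    (hid : ∀ n i, IdentDistrib (ξ n i) ξ₀ μ μ)
    (Z : ℕ → Ω → ℕ)
    (hZ0 : ∀ ω, Z 0 ω = 1)
    (hZS : ∀ n ω, Z (n + 1) ω = ∑ i ∈ Finset.range (Z n ω), ξ n i ω)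
    (p : ℝ) (hp : 1 ≤ p) :
    ∀ n : ℕ,
      (∫⁻ ω, (Z n ω : ℝ≥0∞) ^ p ∂μ) ≤ (∫⁻ ω, (ξ₀ ω : ℝ≥0∞) ^ p ∂μ) ^ n := by
  have hp0 : (0:ℝ) < p := lt_of_lt_of_le one_pos hp
  set M : ℝ≥0∞ := ∫⁻ ω, (ξ₀ ω : ℝ≥0∞) ^ p ∂μ with hM
  -- the power function on ℕ is measurable (discrete σ-algebra)
  have hφ : Measurable (fun m : ℕ => (m : ℝ≥0∞) ^ p) := measurable_from_top
  -- σ-algebras generated by the first n rows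
  set 𝔉 : ℕ → MeasurableSpace Ω := fun n =>
    ⨆ (q : ℕ × ℕ) (_ : q ∈ {q : ℕ × ℕ | q.1 < n}),
      MeasurableSpace.comap (ξ q.1 q.2) inferInstance with h𝔉
  have h𝔉le : ∀ n, 𝔉 n ≤ m0 := by
    intro n
    refine iSup_le fun q => iSup_le fun _ => ?_
    exact measurable_iff_comap_le.mp (hmeas q.1 q.2)
  have h𝔉mono : ∀ {a b : ℕ}, a ≤ b → 𝔉 a ≤ 𝔉 b := by
    intro a b hab
    refine iSup_le fun q => iSup_le fun hq => ?_
    exact le_iSup₂ (f := fun (q : ℕ × ℕ) (_ : q ∈ {q : ℕ × ℕ | q.1 < b}) =>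
      MeasurableSpace.comap (ξ q.1 q.2) inferInstance) q (lt_of_lt_of_le hq hab)
  have hξ𝔉 : ∀ n i, Measurable[𝔉 (n+1)] (ξ n i) := by
    intro n i
    refine measurable_iff_comap_le.mpr ?_
    exact le_iSup₂ (f := fun (q : ℕ × ℕ) (_ : q ∈ {q : ℕ × ℕ | q.1 < n+1}) =>
      MeasurableSpace.comap (ξ q.1 q.2) inferInstance) (n, i) (Nat.lt_succ_self n)
  have hZ𝔉 : ∀ n, Measurable[𝔉 n] (Z n) := by
    intro n
    induction n with
    | zero =>
      have : Z 0 = fun _ => 1 := funext hZ0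
      rw [this]; exact measurable_const
    | succ n ih =>
      refine @measurable_to_countable' ℕ Ω inferInstance inferInstance (𝔉 (n+1)) _ fun m => ?_
      have hset : Z (n+1) ⁻¹' {m} =
          ⋃ k, (Z n ⁻¹' {k}) ∩ {ω | ∑ i ∈ Finset.range k, ξ n i ω = m} := by
        ext ω
        simp only [Set.mem_preimage, Set.mem_singleton_iff, Set.mem_iUnion, Set.mem_inter_iff,
          Set.mem_setOf_eq, hZS n ω]
        constructor
        · intro h; exact ⟨Z n ω, rfl, h⟩
        · rintro ⟨k, rfl, h⟩; exact h
      rw [hset]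
      refine MeasurableSet.iUnion fun k => MeasurableSet.inter ?_ ?_
      · exact (ih.mono (h𝔉mono (Nat.le_succ n)) le_rfl) (measurableSet_singleton k)
      · have hs : Measurable[𝔉 (n+1)] (fun ω => ∑ i ∈ Finset.range k, ξ n i ω) :=
          Finset.measurable_sum _ fun i _ => hξ𝔉 n i
        exact hs (measurableSet_singleton m)
  have hZmeas : ∀ n, Measurable (Z n) := fun n => (hZ𝔉 n).mono (h𝔉le n) le_rfl
  -- independence of Z n from row n
  have hZξ : ∀ n i, IndepFun (Z n) (ξ n i) μ := by
    intro n i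
    have hbig := indep_biSup_compl
      (s := fun q : ℕ × ℕ => MeasurableSpace.comap (ξ q.1 q.2) inferInstance)
      (fun q => measurable_iff_comap_le.mp (hmeas q.1 q.2)) hindep {q : ℕ × ℕ | q.1 < n}
    rw [IndepFun_iff_Indep]
    refine indep_of_indep_of_le_right (indep_of_indep_of_le_left hbig ?_) ?_
    · exact measurable_iff_comap_le.mp (hZ𝔉 n)
    · refine le_iSup₂ (f := fun (q : ℕ × ℕ) (_ : q ∈ {q : ℕ × ℕ | q.1 < n}ᶜ) =>
        MeasurableSpace.comap (ξ q.1 q.2) inferInstance) (n, i) ?_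
      simp
  -- moments of the offspring variables
  have hmom : ∀ n i, (∫⁻ ω, (ξ n i ω : ℝ≥0∞) ^ p ∂μ) = M := by
    intro n i
    exact ((hid n i).comp hφ).lintegral_eq
  have hAk : ∀ n k, MeasurableSet (Z n ⁻¹' {k}) :=
    fun n k => (hZmeas n) (measurableSet_singleton k)
  have hφind : Measurable (fun m : ℕ => Set.indicator {k₀ : ℕ | True} (1 : ℕ → ℝ≥0∞) m) :=
    measurable_from_top
  -- Claim A : E[1_{Z n = k} ξ_{n,i}^p] = μ(Z n = k) * M
  have hA : ∀ n i k,
      (∫⁻ ω, Set.indicator (Z n ⁻¹' {k}) (1 : Ω → ℝ≥0∞) ω * (ξ n i ω : ℝ≥0∞) ^ p ∂μ)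
        = μ (Z n ⁻¹' {k}) * M := by
    intro n i k
    have hcomp : ∀ ω, Set.indicator (Z n ⁻¹' {k}) (1 : Ω → ℝ≥0∞) ω
        = Set.indicator {k} (1 : ℕ → ℝ≥0∞) (Z n ω) := by
      intro ω; by_cases h : Z n ω = k <;> simp [Set.indicator, h]
    have hmf : Measurable (fun ω => Set.indicator {k} (1 : ℕ → ℝ≥0∞) (Z n ω)) :=
      (measurable_from_top (f := Set.indicator {k} (1 : ℕ → ℝ≥0∞))).comp (hZmeas n)
    have hmg : Measurable (fun ω => (ξ n i ω : ℝ≥0∞) ^ p) := hφ.comp (hmeas n i)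
    have hI : IndepFun (fun ω => Set.indicator {k} (1 : ℕ → ℝ≥0∞) (Z n ω))
        (fun ω => (ξ n i ω : ℝ≥0∞) ^ p) μ :=
      (hZξ n i).comp (measurable_from_top (f := Set.indicator {k} (1 : ℕ → ℝ≥0∞))) hφ
    simp_rw [hcomp]
    rw [lintegral_mul_eq_lintegral_mul_lintegral_of_indepFun'' hmf.aemeasurable
      hmg.aemeasurable hI, hmom n i]
    congr 1
    simp_rw [← hcomp]
    exact lintegral_indicator_one (hAk n k)
  -- key conditioning identity
  have key : ∀ n, (∫⁻ ω, (Z n ω : ℝ≥0∞) ^ (p - 1)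
        * ∑ i ∈ Finset.range (Z n ω), (ξ n i ω : ℝ≥0∞) ^ p ∂μ)
      = (∫⁻ ω, (Z n ω : ℝ≥0∞) ^ p ∂μ) * M := by
    intro n
    have hSmeas : ∀ k, Measurable (fun ω => ∑ i ∈ Finset.range k, (ξ n i ω : ℝ≥0∞) ^ p) :=
      fun k => Finset.measurable_sum _ fun i _ => hφ.comp (hmeas n i)
    have hterm_meas : ∀ k : ℕ, Measurable (fun ω => Set.indicator (Z n ⁻¹' {k}) (1 : Ω → ℝ≥0∞) ω *
        ((k : ℝ≥0∞) ^ (p - 1) * ∑ i ∈ Finset.range k, (ξ n i ω : ℝ≥0∞) ^ p)) := by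
      intro k
      exact ((measurable_one.indicator (hAk n k)).mul (measurable_const.mul (hSmeas k)))
    have hpt : ∀ ω, (Z n ω : ℝ≥0∞) ^ (p - 1) * ∑ i ∈ Finset.range (Z n ω), (ξ n i ω : ℝ≥0∞) ^ p
        = ∑' k : ℕ, Set.indicator (Z n ⁻¹' {k}) (1 : Ω → ℝ≥0∞) ω *
            ((k : ℝ≥0∞) ^ (p - 1) * ∑ i ∈ Finset.range k, (ξ n i ω : ℝ≥0∞) ^ p) := by
      intro ω
      rw [tsum_eq_single (Z n ω) ?_]
      · rw [Set.indicator_of_mem (by simp : ω ∈ Z n ⁻¹' {Z n ω})]; simp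
      · intro k hk
        rw [Set.indicator_of_notMem (fun h => hk ((Set.mem_preimage.mp h).symm)), zero_mul]
    -- the value of each summand
    have hterm : ∀ k : ℕ, (∫⁻ ω, Set.indicator (Z n ⁻¹' {k}) (1 : Ω → ℝ≥0∞) ω *
          ((k : ℝ≥0∞) ^ (p - 1) * ∑ i ∈ Finset.range k, (ξ n i ω : ℝ≥0∞) ^ p) ∂μ)
        = (k : ℝ≥0∞) ^ p * μ (Z n ⁻¹' {k}) * M := by
      intro k
      have hre : ∀ ω, Set.indicator (Z n ⁻¹' {k}) (1 : Ω → ℝ≥0∞) ω *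
            ((k : ℝ≥0∞) ^ (p - 1) * ∑ i ∈ Finset.range k, (ξ n i ω : ℝ≥0∞) ^ p)
          = ∑ i ∈ Finset.range k, (k : ℝ≥0∞) ^ (p - 1) *
              (Set.indicator (Z n ⁻¹' {k}) (1 : Ω → ℝ≥0∞) ω * (ξ n i ω : ℝ≥0∞) ^ p) := by
        intro ω
        rw [Finset.mul_sum, Finset.mul_sum]
        refine Finset.sum_congr rfl fun i _ => by ring
      simp_rw [hre]
      have hm2 : ∀ i : ℕ, Measurable fun ω =>
          Set.indicator (Z n ⁻¹' {k}) (1 : Ω → ℝ≥0∞) ω * (ξ n i ω : ℝ≥0∞) ^ p :=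
        fun i => (measurable_one.indicator (hAk n k)).mul (hφ.comp (hmeas n i))
      have hm1 : ∀ i ∈ Finset.range k, Measurable fun ω => (k : ℝ≥0∞) ^ (p - 1) *
          (Set.indicator (Z n ⁻¹' {k}) (1 : Ω → ℝ≥0∞) ω * (ξ n i ω : ℝ≥0∞) ^ p) :=
        fun i _ => (hm2 i).const_mul _
      rw [lintegral_finset_sum _ hm1]
      have : ∀ i ∈ Finset.range k, (∫⁻ ω, (k : ℝ≥0∞) ^ (p - 1) *
            (Set.indicator (Z n ⁻¹' {k}) (1 : Ω → ℝ≥0∞) ω * (ξ n i ω : ℝ≥0∞) ^ p) ∂μ)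
          = (k : ℝ≥0∞) ^ (p - 1) * (μ (Z n ⁻¹' {k}) * M) := by
        intro i _
        rw [lintegral_const_mul _ (hm2 i), hA n i k]
      rw [Finset.sum_congr rfl this, Finset.sum_const, Finset.card_range, nsmul_eq_mul]
      -- (k) * (k^(p-1) * (μ A * M)) = k^p * μ A * M
      rcases Nat.eq_zero_or_pos k with hk | hk
      · subst hk
        simp [ENNReal.zero_rpow_of_pos hp0]
      · have hk0 : (k : ℝ≥0∞) ≠ 0 := by exact_mod_cast hk.ne'
        have hktop : (k : ℝ≥0∞) ≠ ⊤ := ENNReal.natCast_ne_top k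
        have : (k : ℝ≥0∞) * (k : ℝ≥0∞) ^ (p - 1) = (k : ℝ≥0∞) ^ p := by
          nth_rewrite 1 [← ENNReal.rpow_one (k : ℝ≥0∞)]
          rw [← ENNReal.rpow_add _ _ hk0 hktop]
          ring_nf
        rw [← mul_assoc, this, mul_assoc]
    have hlhs : (∫⁻ ω, (Z n ω : ℝ≥0∞) ^ p ∂μ)
        = ∑' k : ℕ, (k : ℝ≥0∞) ^ p * μ (Z n ⁻¹' {k}) := by
      rw [← lintegral_map hφ (hZmeas n), lintegral_countable']
      refine tsum_congr fun k => ?_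
      rw [Measure.map_apply (hZmeas n) (measurableSet_singleton k)]
    calc (∫⁻ ω, (Z n ω : ℝ≥0∞) ^ (p - 1)
          * ∑ i ∈ Finset.range (Z n ω), (ξ n i ω : ℝ≥0∞) ^ p ∂μ)
        = ∑' k : ℕ, ∫⁻ ω, Set.indicator (Z n ⁻¹' {k}) (1 : Ω → ℝ≥0∞) ω *
            ((k : ℝ≥0∞) ^ (p - 1) * ∑ i ∈ Finset.range k, (ξ n i ω : ℝ≥0∞) ^ p) ∂μ := by
          rw [← lintegral_tsum (fun k => (hterm_meas k).aemeasurable)]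
          exact lintegral_congr hpt
      _ = ∑' k : ℕ, (k : ℝ≥0∞) ^ p * μ (Z n ⁻¹' {k}) * M := tsum_congr hterm
      _ = (∑' k : ℕ, (k : ℝ≥0∞) ^ p * μ (Z n ⁻¹' {k})) * M := ENNReal.tsum_mul_right
      _ = (∫⁻ ω, (Z n ω : ℝ≥0∞) ^ p ∂μ) * M := by rw [hlhs]
  -- main induction
  intro n
  induction n with
  | zero => simp [hZ0]
  | succ n ih =>
    have step : (∫⁻ ω, (Z (n+1) ω : ℝ≥0∞) ^ p ∂μ)
        ≤ ∫⁻ ω, (Z n ω : ℝ≥0∞) ^ (p - 1)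
            * ∑ i ∈ Finset.range (Z n ω), (ξ n i ω : ℝ≥0∞) ^ p ∂μ := by
      refine lintegral_mono fun ω => ?_
      rw [hZS n ω, Nat.cast_sum]
      exact gw_aux_pow_sum_le _ hp
    calc (∫⁻ ω, (Z (n+1) ω : ℝ≥0∞) ^ p ∂μ)
        ≤ _ := step
      _ = (∫⁻ ω, (Z n ω : ℝ≥0∞) ^ p ∂μ) * M := key n
      _ ≤ M ^ n * M := mul_le_mul_left ih M
      _ = M ^ (n+1) := (pow_succ M n).symm


/-- For a Galton–Watson process `(Z_n)` built from an i.i.d. array `(ξ_{n,i})` of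
offspring variables distributed as `ξ₀`, with `Z_0 = 1` and
`Z_{n+1} = ∑_{i<Z_n} ξ_{n,i}`, one has `E[Z_n^{2q}] ≤ E[ξ^{2q}]^n` for every real
`q ≥ 1` and every `n ≥ 0` (trivially true when `E[ξ^{2q}] = ∞`). -/
theorem gw_generation_moment_bound
    {Ω : Type*} [MeasurableSpace Ω] (μ : Measure Ω) [IsProbabilityMeasure μ]
    (ξ : ℕ → ℕ → Ω → ℕ) (ξ₀ : Ω → ℕ)
    (hmeas : ∀ n i, Measurable (ξ n i)) (hmeas0 : Measurable ξ₀)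
    (hindep : iIndepFun
      (fun p : ℕ × ℕ => ξ p.1 p.2) μ)
    (hid : ∀ n i, IdentDistrib (ξ n i) ξ₀ μ μ)
    (Z : ℕ → Ω → ℕ)
    (hZ0 : ∀ ω, Z 0 ω = 1)
    (hZS : ∀ n ω, Z (n + 1) ω = ∑ i ∈ Finset.range (Z n ω), ξ n i ω) :
    ∀ q : ℝ, 1 ≤ q → ∀ n : ℕ,
      (∫⁻ ω, (Z n ω : ℝ≥0∞) ^ (2 * q) ∂μ) ≤
        (∫⁻ ω, (ξ₀ ω : ℝ≥0∞) ^ (2 * q) ∂μ) ^ n := by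
  intro q hq n
  exact gw_moment_aux μ ξ ξ₀ hmeas hmeas0 hindep hid Z hZ0 hZS (2 * q) (by linarith) n
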